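/- Let g : Ω → ℝ be continuous with g > 0 and ∫_M g(ax) dμ(a) = 1 for all x ∈ Ω, and let L denote the Ruelle operator with weight g, i.e. Lφ(x) = ∫_M g(ax) φ(ax) dμ(a). Define D*_g(x,y) = sup_{n≥1} sup_{a∈M^n} | Π_{i=0}^{n−1} g(σ^i(ax)) / g(σ^i(ay)) − 1 |, a value in [0,+∞]. Then for every continuous φ : Ω → ℝ, every n ≥ 1 and all x,y ∈ Ω: |L^n φ(x) − L^n φ(y)| ≤ sup_{a∈M^n} |φ(ax) − φ(ay)| + ‖φ‖_0 · D*_g(x,y). -/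

import Mathlib

open MeasureTheory Filter

noncomputable section

namespace Paper

variable {M : Type*} [MetricSpace M]

/-- Prepend one symbol: `ax = (a, x₁, x₂, …)`. -/
def cons (a : M) (x : ℕ → M) : ℕ → M
  | 0 => a
  | n + 1 => x n

/-- Prepend a finite word `a ∈ Mⁿ`. -/
def consW {n : ℕ} (a : Fin n → M) (x : ℕ → M) : ℕ → M :=
  fun k => if h : k < n then a ⟨k, h⟩ else x (k - n)

/-- The left shift `σ`. -/
def shift (x : ℕ → M) : ℕ → M := fun n => x (n + 1)

/-- Birkhoff sum `Sₙ f = f + f∘σ + … + f∘σ^{n-1}`. -/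
def birk (f : (ℕ → M) → ℝ) (n : ℕ) (x : ℕ → M) : ℝ :=
  ∑ i ∈ Finset.range n, f (shift^[i] x)

/-- The metric `d_Ω(x,y) = Σ_{n≥1} 2^{-n} d(xₙ,yₙ)`. -/
def dOmega (x y : ℕ → M) : ℝ :=
  ∑' n : ℕ, (1 / 2 : ℝ) ^ (n + 1) * dist (x n) (y n)

/-- `dₙ(x,y) = max_{0 ≤ k < n} d_Ω(σᵏx, σᵏy)`. -/
def dN (n : ℕ) (x y : ℕ → M) : ℝ :=
  ⨆ k : Fin n, dOmega (shift^[(k : ℕ)] x) (shift^[(k : ℕ)] y)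

/-- The (strong) Walters condition. -/
def Walters (f : (ℕ → M) → ℝ) : Prop :=
  ∀ ε : ℝ, 0 < ε → ∃ η : ℝ, 0 < η ∧ ∀ n : ℕ, 1 ≤ n → ∀ x y : ℕ → M,
    dN n x y ≤ η → |birk f n x - birk f n y| ≤ ε

/-- `C_f(x,y) = sup_{n ≥ 1} sup_{a ∈ Mⁿ} (Sₙf(ax) − Sₙf(ay))`, a value in `(−∞,+∞]`. -/
def Cf (f : (ℕ → M) → ℝ) (x y : ℕ → M) : EReal :=
  ⨆ n : ℕ, ⨆ a : Fin (n + 1) → M,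
    ((birk f (n + 1) (consW a x) - birk f (n + 1) (consW a y) : ℝ) : EReal)

/-- The weak Walters condition. -/
def WeakWalters (f : (ℕ → M) → ℝ) : Prop :=
  ∀ ε : ℝ, 0 < ε → ∃ δ : ℝ, 0 < δ ∧ ∀ x y : ℕ → M,
    dOmega x y ≤ δ → Cf f x y ≤ (ε : EReal)

variable [MeasurableSpace M]

/-- The Ruelle operator `L_f φ(x) = ∫_M e^{f(ax)} φ(ax) dμ(a)`. -/
def ruelle (μ : Measure M) (f : (ℕ → M) → ℝ) (φ : (ℕ → M) → ℝ) : (ℕ → M) → ℝ :=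
  fun x => ∫ a, Real.exp (f (cons a x)) * φ (cons a x) ∂μ

/-- The Ruelle operator with weight `g`: `Lφ(x) = ∫_M g(ax) φ(ax) dμ(a)`. -/
def ruelleG (μ : Measure M) (g : (ℕ → M) → ℝ) (φ : (ℕ → M) → ℝ) : (ℕ → M) → ℝ :=
  fun x => ∫ a, g (cons a x) * φ (cons a x) ∂μ

/-- `D*_g(x,y) = sup_{n≥1} sup_{a∈Mⁿ} |Π_{i<n} g(σⁱ(ax))/g(σⁱ(ay)) − 1|`,
a value in `[0,+∞]` (inside `EReal`). -/
def Dstar (g : (ℕ → M) → ℝ) (x y : ℕ → M) : EReal :=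
  ⨆ n : ℕ, ⨆ a : Fin (n + 1) → M,
    ((|(∏ i ∈ Finset.range (n + 1),
        g (shift^[i] (consW a x)) / g (shift^[i] (consW a y))) - 1| : ℝ) : EReal)


set_option linter.unusedSectionVars false

section Helpers

lemma continuous_shift : Continuous (shift : (ℕ → M) → (ℕ → M)) :=
  continuous_pi fun n => continuous_apply (n + 1)

lemma continuous_consW {n : ℕ} (x : ℕ → M) :
    Continuous (fun a : Fin n → M => consW a x) := by
  refine continuous_pi fun k => ?_
  by_cases h : k < n
  · simp only [consW, dif_pos h]; exact continuous_apply _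
  · simp only [consW, dif_neg h]; exact continuous_const

lemma continuous_cons2 {n : ℕ} (y : ℕ → M) :
    Continuous (fun p : M × (Fin n → M) => cons p.1 (consW p.2 y)) := by
  refine continuous_pi fun k => ?_
  match k with
  | 0 => exact continuous_fst
  | k + 1 =>
    show Continuous fun p : M × (Fin n → M) => consW p.2 y k
    exact ((continuous_apply k).comp (continuous_consW y)).comp continuous_snd

lemma shift_cons (b : M) (z : ℕ → M) : shift (cons b z) = z := rfl

lemma consW_eq_cons {n : ℕ} (a : Fin (n + 1) → M) (y : ℕ → M) :
    consW a y = cons (a 0) (consW (Fin.tail a) y) := by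
  funext k
  match k with
  | 0 => simp [consW, cons]
  | k + 1 =>
    show (if h : k + 1 < n + 1 then a ⟨k+1, h⟩ else y (k + 1 - (n+1)))
        = (if h : k < n then Fin.tail a ⟨k, h⟩ else y (k - n))
    by_cases h : k < n
    · rw [dif_pos (by omega), dif_pos h]
      rfl
    · rw [dif_neg (by omega), dif_neg h]
      congr 1
      omega

lemma prod_succ (g : (ℕ → M) → ℝ) {n : ℕ} (a : Fin (n + 1) → M) (y : ℕ → M) :
    ∏ i ∈ Finset.range (n + 1), g (shift^[i] (consW a y))
      = g (consW a y) * ∏ i ∈ Finset.range n, g (shift^[i] (consW (Fin.tail a) y)) := by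
  have hsh : shift (consW a y) = consW (Fin.tail a) y := by
    rw [consW_eq_cons a y, shift_cons]
  rw [Finset.prod_range_succ', mul_comm]
  congr 1
  refine Finset.prod_congr rfl fun i _ => ?_
  rw [Function.iterate_succ_apply, hsh]

lemma integrable_cont {α : Type*} [TopologicalSpace α] [CompactSpace α] [MeasurableSpace α]
    [BorelSpace α] [T2Space α] (ν : Measure α) [IsFiniteMeasure ν] {f : α → ℝ}
    (hf : Continuous f) : Integrable f ν :=
  hf.integrable_of_hasCompactSupport
    (IsCompact.of_isClosed_subset isCompact_univ (isClosed_tsupport f) (Set.subset_univ _))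

lemma integral_prodG [CompactSpace M] [BorelSpace M]
    (μ : Measure M) [IsProbabilityMeasure μ]
    (g : (ℕ → M) → ℝ) (hg : Continuous g)
    (hgnorm : ∀ x : ℕ → M, ∫ a, g (cons a x) ∂μ = 1) :
    ∀ (n : ℕ) (y : ℕ → M),
      ∫ a : Fin n → M, ∏ i ∈ Finset.range n, g (shift^[i] (consW a y))
        ∂(Measure.pi fun _ : Fin n => μ) = 1 := by
  intro n
  induction n with
  | zero => intro y; simp
  | succ n ih =>
    intro y
    set E := MeasurableEquiv.piFinSuccAbove (fun _ : Fin (n + 1) => M) 0 with hE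
    have hmp := measurePreserving_piFinSuccAbove (fun _ : Fin (n + 1) => μ) 0
    set G : M × (Fin n → M) → ℝ := fun p =>
      g (cons p.1 (consW p.2 y)) * ∏ i ∈ Finset.range n, g (shift^[i] (consW p.2 y)) with hG
    have hGcont : Continuous G := by
      apply Continuous.mul
      · exact hg.comp (continuous_cons2 y)
      · apply continuous_finset_prod
        intro i _
        exact (hg.comp ((continuous_shift.iterate i).comp (continuous_consW y))).comp
          continuous_snd
    have hFG : ∀ a : Fin (n + 1) → M,
        (∏ i ∈ Finset.range (n + 1), g (shift^[i] (consW a y))) = G (E a) := by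
      intro a
      have hEa : E a = (a 0, Fin.tail a) := by
        simp [hE, MeasurableEquiv.piFinSuccAbove_apply]
      rw [prod_succ g a y, consW_eq_cons a y, hG, hEa]
    calc ∫ a : Fin (n+1) → M, ∏ i ∈ Finset.range (n + 1), g (shift^[i] (consW a y))
          ∂(Measure.pi fun _ : Fin (n+1) => μ)
        = ∫ a : Fin (n+1) → M, G (E a) ∂(Measure.pi fun _ : Fin (n+1) => μ) :=
          integral_congr_ae (Filter.Eventually.of_forall hFG)
      _ = ∫ p, G p ∂(μ.prod (Measure.pi fun _ : Fin n => μ)) :=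
          hmp.integral_comp E.measurableEmbedding G
      _ = ∫ c : Fin n → M, ∫ b : M, G (b, c) ∂μ ∂(Measure.pi fun _ : Fin n => μ) :=
          integral_prod_symm G (integrable_cont _ hGcont)
      _ = ∫ c : Fin n → M, ∏ i ∈ Finset.range n, g (shift^[i] (consW c y))
            ∂(Measure.pi fun _ : Fin n => μ) := by
          refine integral_congr_ae (Filter.Eventually.of_forall fun c => ?_)
          rw [hG]
          simp only
          rw [integral_mul_const, hgnorm (consW c y), one_mul]
      _ = 1 := ih y

lemma ereal_mul_aux {K D : ℝ} (hK : 0 ≤ K) {b : EReal} (hb : (D : EReal) ≤ b) :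
    ((K * D : ℝ) : EReal) ≤ (K : EReal) * b := by
  induction b with
  | bot => exact absurd (le_bot_iff.1 hb) (EReal.coe_ne_bot D)
  | coe r =>
      rw [← EReal.coe_mul]
      exact EReal.coe_le_coe_iff.2 (mul_le_mul_of_nonneg_left (EReal.coe_le_coe_iff.1 hb) hK)
  | top =>
      rcases hK.eq_or_lt with h | h
      · simp [← h]
      · rw [EReal.coe_mul_top_of_pos h]; exact le_top

end Helpers

/-- For `g > 0` continuous with `∫ g(ax) dμ(a) = 1` and `L` the Ruelle
operator with weight `g`, for every continuous `φ`, every `n ≥ 1` and all `x, y`: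
`|Lⁿφ(x) − Lⁿφ(y)| ≤ sup_{a∈Mⁿ}|φ(ax) − φ(ay)| + ‖φ‖₀ · D*_g(x,y)`,
where `Lⁿφ(x) = ∫_{Mⁿ} Π_{i<n} g(σⁱ(ax)) · φ(ax) dμ(a₁)⋯dμ(aₙ)`. -/
theorem statement10 [CompactSpace M] [BorelSpace M]
    (μ : Measure M) [IsProbabilityMeasure μ]
    (g : (ℕ → M) → ℝ) (hg : Continuous g) (hgpos : ∀ x, 0 < g x)
    (hgnorm : ∀ x : ℕ → M, ∫ a, g (cons a x) ∂μ = 1)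
    (φ : (ℕ → M) → ℝ) (hφ : Continuous φ)
    (n : ℕ) (hn : 1 ≤ n) (x y : ℕ → M) :
    ((|(∫ a : Fin n → M,
          (∏ i ∈ Finset.range n, g (shift^[i] (consW a x))) * φ (consW a x)
            ∂(Measure.pi fun _ : Fin n => μ)) -
        (∫ a : Fin n → M,
          (∏ i ∈ Finset.range n, g (shift^[i] (consW a y))) * φ (consW a y)
            ∂(Measure.pi fun _ : Fin n => μ))| : ℝ) : EReal)
      ≤ (⨆ a : Fin n → M, ((|φ (consW a x) - φ (consW a y)| : ℝ) : EReal))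
        + ((⨆ z : ℕ → M, |φ z| : ℝ) : EReal) * Dstar g x y := by
  obtain ⟨m, rfl⟩ : ∃ m, n = m + 1 := ⟨n - 1, (Nat.succ_pred_eq_of_pos hn).symm⟩
  haveI : Nonempty M := by
    by_contra h
    rw [not_nonempty_iff] at h
    have h1 := measure_univ (μ := μ)
    rw [Set.univ_eq_empty_iff.2 h, measure_empty] at h1
    exact zero_ne_one h1
  haveI : Nonempty (ℕ → M) := ⟨fun _ => Classical.arbitrary M⟩
  set ν := (Measure.pi fun _ : Fin (m + 1) => μ) with hν
  set Px : (Fin (m + 1) → M) → ℝ :=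
    fun a => ∏ i ∈ Finset.range (m + 1), g (shift^[i] (consW a x)) with hPx
  set Py : (Fin (m + 1) → M) → ℝ :=
    fun a => ∏ i ∈ Finset.range (m + 1), g (shift^[i] (consW a y)) with hPy
  set φx : (Fin (m + 1) → M) → ℝ := fun a => φ (consW a x) with hφx
  set φy : (Fin (m + 1) → M) → ℝ := fun a => φ (consW a y) with hφy
  set fD : (Fin (m + 1) → M) → ℝ := fun a =>
    |(∏ i ∈ Finset.range (m + 1),
        g (shift^[i] (consW a x)) / g (shift^[i] (consW a y))) - 1| with hfD
  have hPxc : Continuous Px := continuous_finset_prod _ fun i _ =>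
    hg.comp ((continuous_shift.iterate i).comp (continuous_consW x))
  have hPyc : Continuous Py := continuous_finset_prod _ fun i _ =>
    hg.comp ((continuous_shift.iterate i).comp (continuous_consW y))
  have hφxc : Continuous φx := hφ.comp (continuous_consW x)
  have hφyc : Continuous φy := hφ.comp (continuous_consW y)
  have hfDc : Continuous fD := by
    apply Continuous.abs
    apply Continuous.sub _ continuous_const
    apply continuous_finset_prod
    intro i _
    exact (hg.comp ((continuous_shift.iterate i).comp (continuous_consW x))).div
      (hg.comp ((continuous_shift.iterate i).comp (continuous_consW y)))
      (fun a => (hgpos _).ne')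
  have hPypos : ∀ a, 0 < Py a := fun a => Finset.prod_pos fun i _ => hgpos _
  have int1 : Integrable (fun a => Px a * φx a) ν := integrable_cont _ (hPxc.mul hφxc)
  have int2 : Integrable (fun a => Py a * φy a) ν := integrable_cont _ (hPyc.mul hφyc)
  obtain ⟨a₀, -, ha₀⟩ := isCompact_univ.exists_isMaxOn Set.univ_nonempty hfDc.continuousOn
  obtain ⟨a₁, -, ha₁⟩ := isCompact_univ.exists_isMaxOn Set.univ_nonempty
    ((hφxc.sub hφyc).abs).continuousOn
  set D := fD a₀ with hD
  set S := |φx a₁ - φy a₁| with hS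
  set K := (⨆ z : ℕ → M, |φ z| : ℝ) with hKdef
  have hbdd : BddAbove (Set.range fun z : ℕ → M => |φ z|) := (isCompact_range hφ.abs).bddAbove
  have hK : ∀ z : ℕ → M, |φ z| ≤ K := fun z => le_ciSup hbdd z
  have hK0 : 0 ≤ K := le_trans (abs_nonneg _) (hK (Classical.arbitrary _))
  have hratio : ∀ a : Fin (m + 1) → M,
      (∏ i ∈ Finset.range (m + 1),
        g (shift^[i] (consW a x)) / g (shift^[i] (consW a y))) = Px a / Py a :=
    fun a => Finset.prod_div_distrib _ _
  have key : |(∫ a, Px a * φx a ∂ν) - ∫ a, Py a * φy a ∂ν| ≤ S + K * D := by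
    rw [← integral_sub int1 int2]
    have norm_le := norm_integral_le_integral_norm
      (f := fun a => Px a * φx a - Py a * φy a) (μ := ν)
    rw [Real.norm_eq_abs] at norm_le
    refine le_trans norm_le ?_
    have step : ∫ a, ‖Px a * φx a - Py a * φy a‖ ∂ν ≤ ∫ a, Py a * (S + K * D) ∂ν := by
      refine integral_mono (int1.sub int2).norm
        ((integrable_cont _ hPyc).mul_const _) fun a => ?_
      rw [Real.norm_eq_abs]
      have e1 : |φx a - φy a| ≤ S := ha₁ (Set.mem_univ a)
      have e2 : |Px a / Py a - 1| ≤ D := by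
        have h : fD a ≤ fD a₀ := ha₀ (Set.mem_univ a)
        rw [← hratio a]
        exact h
      have e3 : |φx a| ≤ K := hK _
      have hsplit : Px a * φx a - Py a * φy a
          = Py a * (φx a - φy a) + (Px a - Py a) * φx a := by ring
      have habs2 : |Px a - Py a| = Py a * |Px a / Py a - 1| := by
        have hne : Py a ≠ 0 := (hPypos a).ne'
        have : Px a - Py a = Py a * (Px a / Py a - 1) := by field_simp
        rw [this, abs_mul, abs_of_pos (hPypos a)]
      calc |Px a * φx a - Py a * φy a|
          ≤ |Py a * (φx a - φy a)| + |(Px a - Py a) * φx a| := by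
            rw [hsplit]; exact abs_add_le _ _
        _ = Py a * |φx a - φy a| + |Px a - Py a| * |φx a| := by
            rw [abs_mul, abs_mul, abs_of_pos (hPypos a)]
        _ ≤ Py a * S + (Py a * D) * K := by
            refine add_le_add (mul_le_mul_of_nonneg_left e1 (hPypos a).le) ?_
            rw [habs2]
            have hDa0 : 0 ≤ |Px a / Py a - 1| := abs_nonneg _
            have hD0 : 0 ≤ D := hD ▸ abs_nonneg _
            have := mul_le_mul (mul_le_mul_of_nonneg_left e2 (hPypos a).le) e3
              (abs_nonneg _) (mul_nonneg (hPypos a).le hD0)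
            simpa using this
        _ = Py a * (S + K * D) := by ring
    refine le_trans step ?_
    rw [integral_mul_const]
    have hnorm : ∫ a, Py a ∂ν = 1 := integral_prodG μ g hg hgnorm (m + 1) y
    rw [hnorm, one_mul]
  refine le_trans (EReal.coe_le_coe_iff.2 key) ?_
  rw [EReal.coe_add]
  refine add_le_add ?_ ?_
  · exact le_iSup
      (fun a : Fin (m + 1) → M => ((|φ (consW a x) - φ (consW a y)| : ℝ) : EReal)) a₁
  · have hDle : (D : EReal) ≤ Dstar g x y := by
      refine le_trans ?_ (le_iSup (fun k : ℕ => ⨆ a : Fin (k + 1) → M,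
        ((|(∏ i ∈ Finset.range (k + 1),
          g (shift^[i] (consW a x)) / g (shift^[i] (consW a y))) - 1| : ℝ) : EReal)) m)
      exact le_iSup (fun a : Fin (m + 1) → M =>
        ((|(∏ i ∈ Finset.range (m + 1),
          g (shift^[i] (consW a x)) / g (shift^[i] (consW a y))) - 1| : ℝ) : EReal)) a₀
    exact ereal_mul_aux hK0 hDle


end Paper
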